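/- Let n ≥ 3 be odd and suppose LTQ_{n−1} contains k pairwise edge-disjoint spanning trees, where k ≤ 2^{n−2}. Then LTQ_n contains k pairwise edge-disjoint spanning trees. -/

import Mathlib

/-- The adjacency relation of the locally twisted cube `LTQ_n`:
vertices are elements of `Fin (2^n)` (binary strings of length `n`, identified
with their decimal values); `u` and `v` are related iff either
(1) for some `2 ≤ i ≤ n-1`, `u_i = ¬v_i`, `u_{i-1} = v_{i-1} ⊕ u_0`, and
    `u_j = v_j` for all remaining bits `j`, or
(2) for some `i ∈ {0,1}`, `u_i = ¬v_i` and `u_j = v_j` for all remaining bits. -/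
def ltqRel (n : ℕ) (u v : Fin (2^n)) : Prop :=
  (∃ i, 2 ≤ i ∧ i ≤ n - 1 ∧
    (u : ℕ).testBit i = !(v : ℕ).testBit i ∧
    (u : ℕ).testBit (i-1) = xor ((v : ℕ).testBit (i-1)) ((u : ℕ).testBit 0) ∧
    ∀ j, j ≠ i → j ≠ i - 1 → (u : ℕ).testBit j = (v : ℕ).testBit j) ∨
  (∃ i, i ≤ 1 ∧
    (u : ℕ).testBit i = !(v : ℕ).testBit i ∧
    ∀ j, j ≠ i → (u : ℕ).testBit j = (v : ℕ).testBit j)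

/-- The `n`-dimensional locally twisted cube as a simple graph on `Fin (2^n)`. -/
def LTQ (n : ℕ) : SimpleGraph (Fin (2^n)) where
  Adj u v := ltqRel n u v ∨ ltqRel n v u
  symm := ⟨fun u v h => h.symm⟩
  loopless := ⟨by
    intro u h
    rcases h with (⟨i, _, _, h, _⟩ | ⟨i, _, h, _⟩) | (⟨i, _, _, h, _⟩ | ⟨i, _, h, _⟩) <;>
      simp at h⟩


open SimpleGraph

namespace LTQProof


/-! ### Bit lemmas -/

lemma tb_high {m x j : ℕ} (hx : x < 2^m) (hj : m ≤ j) : x.testBit j = false :=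
  Nat.testBit_lt_two_pow (lt_of_lt_of_le hx (Nat.pow_le_pow_right (by norm_num) hj))

lemma tb_add {m x : ℕ} (hx : x < 2^m) (j : ℕ) :
    (x + 2^m).testBit j = if j = m then true else x.testBit j := by
  rcases lt_trichotomy j m with hj | rfl | hj
  · rw [if_neg hj.ne, add_comm, Nat.testBit_two_pow_add_gt hj]
  · rw [if_pos rfl, add_comm, Nat.testBit_two_pow_add_eq,
      Nat.testBit_lt_two_pow hx]
    rfl
  · rw [if_neg hj.ne', tb_high hx hj.le, Nat.testBit_lt_two_pow]
    calc x + 2^m < 2^m + 2^m := by omega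
    _ = 2^(m+1) := by rw [pow_succ]; omega
    _ ≤ 2^j := Nat.pow_le_pow_right (by norm_num) hj

/-- the twist map at `ℕ` level -/
def fN (m x : ℕ) : ℕ := if x.testBit 0 then x ^^^ 2^(m-1) else x

lemma fN_lt {m x : ℕ} (hm : 1 ≤ m) (hx : x < 2^m) : fN m x < 2^m := by
  unfold fN
  split
  · exact Nat.xor_lt_two_pow hx (Nat.pow_lt_pow_right (by norm_num) (by omega))
  · exact hx

lemma fN_testBit {m : ℕ} (hm : 2 ≤ m) (x j : ℕ) :
    (fN m x).testBit j = if j = m - 1 then xor (x.testBit (m-1)) (x.testBit 0)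
      else x.testBit j := by
  unfold fN
  cases hb : x.testBit 0 with
  | false =>
    rw [if_neg (by simp)]
    split
    · next h => subst h; simp [hb]
    · rfl
  | true =>
    rw [if_pos rfl, Nat.testBit_xor]
    split
    · next h => subst h; rw [Nat.testBit_two_pow_self]
    · next h => rw [Nat.testBit_two_pow_of_ne (fun hc => h hc.symm)]; simp

lemma fN_invol {m : ℕ} (hm : 2 ≤ m) (x : ℕ) : fN m (fN m x) = x := by
  have hb0 : (fN m x).testBit 0 = x.testBit 0 := by
    rw [fN_testBit hm, if_neg (by omega)]
  conv_lhs => rw [fN, hb0]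
  cases hb : x.testBit 0 with
  | false => simp [fN, hb]
  | true => simp only [fN, hb, if_true]; exact Nat.xor_xor_cancel_right _ _

/-! ### Embeddings -/

def e0 (m : ℕ) : Fin (2^m) ↪ Fin (2^(m+1)) :=
  ⟨fun x => ⟨x.1, lt_of_lt_of_le x.2 (Nat.pow_le_pow_right (by norm_num) (Nat.le_succ m))⟩,
   fun x y hxy => by
     have := Fin.ext_iff.mp hxy
     simp only at this
     exact Fin.ext this⟩

def e1 (m : ℕ) : Fin (2^m) ↪ Fin (2^(m+1)) :=
  ⟨fun x => ⟨x.1 + 2^m, by have := x.2; have h2 : 2^(m+1) = 2^m * 2 := pow_succ 2 m; omega⟩,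
   fun x y hxy => by
     have := Fin.ext_iff.mp hxy
     simp only at this
     exact Fin.ext (by omega)⟩

@[simp] lemma e0_val (m : ℕ) (x : Fin (2^m)) : (e0 m x : ℕ) = x.1 := rfl
@[simp] lemma e1_val (m : ℕ) (x : Fin (2^m)) : (e1 m x : ℕ) = x.1 + 2^m := rfl

lemma e0_lt (m : ℕ) (x : Fin (2^m)) : (e0 m x : ℕ) < 2^m := x.2
lemma e1_ge (m : ℕ) (x : Fin (2^m)) : 2^m ≤ (e1 m x : ℕ) := by simp

lemma e0_ne_e1 (m : ℕ) (x y : Fin (2^m)) : e0 m x ≠ e1 m y := by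
  intro h
  have := congrArg Fin.val h
  have := x.2
  simp only [e0_val, e1_val] at *
  omega

/-- twist map -/
def tw (m : ℕ) (x : Fin (2^m)) : Fin (2^m) :=
  ⟨fN m x.1 % 2^m, Nat.mod_lt _ (Nat.pow_pos (by norm_num))⟩

lemma tw_val {m : ℕ} (hm : 2 ≤ m) (x : Fin (2^m)) : (tw m x : ℕ) = fN m x.1 :=
  Nat.mod_eq_of_lt (fN_lt (by omega) x.2)

lemma tw_inj {m : ℕ} (hm : 2 ≤ m) : Function.Injective (tw m) := by
  have hinv : ∀ x : Fin (2^m), tw m (tw m x) = x := by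
    intro x
    apply Fin.ext
    rw [tw_val hm, tw_val hm, fN_invol hm]
  exact Function.Involutive.injective hinv

/-! ### adjacency transfer -/

lemma ltqRel_e0 {m : ℕ} {u v : Fin (2^m)} (h : ltqRel m u v) :
    ltqRel (m+1) (e0 m u) (e0 m v) := by
  simp only [ltqRel, e0_val] at h ⊢
  rcases h with ⟨i, h2, hi, hrest⟩ | ⟨i, hi, hrest⟩
  · exact Or.inl ⟨i, h2, by omega, hrest⟩
  · exact Or.inr ⟨i, hi, hrest⟩

lemma ltqRel_e1 {m : ℕ} (hm : 2 ≤ m) {u v : Fin (2^m)} (h : ltqRel m u v) :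
    ltqRel (m+1) (e1 m u) (e1 m v) := by
  simp only [ltqRel, e1_val] at h ⊢
  rcases h with ⟨i, h2, hi, hbit, hxor, hrest⟩ | ⟨i, hi, hbit, hrest⟩
  · refine Or.inl ⟨i, h2, by omega, ?_, ?_, ?_⟩
    · rw [tb_add u.2, tb_add v.2, if_neg (by omega), if_neg (by omega)]; exact hbit
    · rw [tb_add u.2, tb_add v.2, tb_add u.2, if_neg (by omega), if_neg (by omega),
        if_neg (by omega)]
      exact hxor
    · intro j hj hj'
      rw [tb_add u.2, tb_add v.2]
      split
      · rfl
      · exact hrest j hj hj'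
  · refine Or.inr ⟨i, hi, ?_, ?_⟩
    · rw [tb_add u.2, tb_add v.2, if_neg (by omega), if_neg (by omega)]; exact hbit
    · intro j hj
      rw [tb_add u.2, tb_add v.2]
      split
      · rfl
      · exact hrest j hj

lemma adj_e0 {m : ℕ} {u v : Fin (2^m)} (h : (LTQ m).Adj u v) :
    (LTQ (m+1)).Adj (e0 m u) (e0 m v) := by
  rcases h with h | h
  · exact Or.inl (ltqRel_e0 h)
  · exact Or.inr (ltqRel_e0 h)

lemma adj_e1 {m : ℕ} (hm : 2 ≤ m) {u v : Fin (2^m)} (h : (LTQ m).Adj u v) :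
    (LTQ (m+1)).Adj (e1 m u) (e1 m v) := by
  rcases h with h | h
  · exact Or.inl (ltqRel_e1 hm h)
  · exact Or.inr (ltqRel_e1 hm h)

lemma adj_matching {m : ℕ} (hm : 2 ≤ m) (x : Fin (2^m)) :
    (LTQ (m+1)).Adj (e0 m x) (e1 m (tw m x)) := by
  refine Or.inl (Or.inl ⟨m, hm, by omega, ?_, ?_, ?_⟩)
  · rw [e0_val, e1_val, tb_high x.2 le_rfl, tb_add (tw m x).2, if_pos rfl]
    rfl
  · rw [e0_val, e1_val, tb_add (tw m x).2, if_neg (by omega), tw_val hm,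
      fN_testBit hm, if_pos rfl]
    cases x.1.testBit (m-1) <;> cases x.1.testBit 0 <;> rfl
  · intro j hj hj'
    rw [e0_val, e1_val, tb_add (tw m x).2, if_neg hj, tw_val hm, fN_testBit hm,
      if_neg hj']

/-! ### general walk lemmas -/

section Walks

variable {W : Type*}

lemma walk_const {G : SimpleGraph W} (h : W → Bool)
    (hG : ∀ ⦃x y⦄, G.Adj x y → h x = h y) :
    ∀ {u v : W}, G.Walk u v → h u = h v := by
  intro u v p
  induction p with
  | nil => rfl
  | cons ha _ ih => exact (hG ha).trans ih

lemma walk_support_const {G : SimpleGraph W} (h : W → Bool)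
    (hG : ∀ ⦃x y⦄, G.Adj x y → h x = h y) :
    ∀ {u v : W} (p : G.Walk u v), ∀ x ∈ p.support, h x = h u := by
  intro u v p
  induction p with
  | nil => simp
  | cons ha p ih =>
    intro x hx
    rw [SimpleGraph.Walk.support_cons, List.mem_cons] at hx
    rcases hx with rfl | hx
    · rfl
    · exact (ih x hx).trans (hG ha).symm

variable {V : Type*} {G : SimpleGraph V}

/-- the canonical hom from `G` to `G.map f` -/
def homMap (G : SimpleGraph V) (f : V ↪ W) : G →g G.map f :=
  ⟨f, fun h => by rw [map_adj]; exact ⟨_, _, h, rfl, rfl⟩⟩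

@[simp] lemma homMap_apply (G : SimpleGraph V) (f : V ↪ W) (v : V) :
    homMap G f v = f v := rfl

lemma map_walk_eq {f : V ↪ W} {x y : W} (p : (G.map f).Walk x y) :
    ∀ (u : V) (h1 : x = f u), ∃ (v : V) (h2 : y = f v) (q : G.Walk u v),
      p.copy h1 h2 = q.map (homMap G f) := by
  induction p with
  | nil =>
    intro u h1
    exact ⟨u, h1, SimpleGraph.Walk.nil, by subst h1; rfl⟩
  | @cons a z c h p ih =>
    intro u h1
    obtain ⟨-, s, t, hst, hs, ht⟩ := h
    obtain rfl : s = u := f.injective (by rw [hs, ← h1])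
    subst ht
    obtain ⟨v, h2, q, hq⟩ := ih t rfl
    refine ⟨v, h2, SimpleGraph.Walk.cons hst q, ?_⟩
    subst h1 h2
    simp only [SimpleGraph.Walk.copy_rfl_rfl] at hq ⊢
    subst hq
    rfl

lemma map_acyclic {f : V ↪ W} (hG : G.IsAcyclic) : (G.map f).IsAcyclic := by
  intro x c hc
  obtain ⟨a, ha⟩ : ∃ a, f a = x := by
    cases c with
    | nil => exact absurd rfl hc.ne_nil
    | cons h p =>
      obtain ⟨-, s, t, _, hs, _⟩ := h
      exact ⟨s, hs⟩
  subst ha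
  obtain ⟨v, h2, q, hq⟩ := map_walk_eq c a rfl
  obtain rfl : a = v := f.injective h2
  rw [show h2 = rfl from rfl, SimpleGraph.Walk.copy_rfl_rfl] at hq
  subst hq
  have hinj : Function.Injective (homMap G f) := f.injective
  exact hG q ((SimpleGraph.Walk.map_isCycle_iff_of_injective hinj).mp hc)

end Walks

/-! ### gluing two trees with one edge -/

lemma glue_isTree {W : Type*} {H₁ H₂ : SimpleGraph W} (h : W → Bool) {a b : W}
    (h₁ : ∀ ⦃x y⦄, H₁.Adj x y → h x = false ∧ h y = false)
    (h₂ : ∀ ⦃x y⦄, H₂.Adj x y → h x = true ∧ h y = true)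
    (ha : h a = false) (hb : h b = true)
    (hr₁ : ∀ x y, h x = false → h y = false → H₁.Reachable x y)
    (hr₂ : ∀ x y, h x = true → h y = true → H₂.Reachable x y)
    (hac₁ : H₁.IsAcyclic) (hac₂ : H₂.IsAcyclic) :
    (H₁ ⊔ H₂ ⊔ fromEdgeSet {s(a, b)}).IsTree := by
  set G := H₁ ⊔ H₂ ⊔ fromEdgeSet {s(a, b)} with hGdef
  have hab : a ≠ b := fun e => by rw [e, hb] at ha; cases ha
  have hGadj : G.Adj a b := Or.inr (by rw [fromEdgeSet_adj]; exact ⟨rfl, hab⟩)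
  have hle1 : H₁ ≤ G := le_trans le_sup_left le_sup_left
  have hle2 : H₂ ≤ G := le_trans le_sup_right le_sup_left
  have hside : ∀ ⦃x y⦄, (H₁ ⊔ H₂).Adj x y → h x = h y := by
    rintro x y (hxy | hxy)
    · rw [(h₁ hxy).1, (h₁ hxy).2]
    · rw [(h₂ hxy).1, (h₂ hxy).2]
  constructor
  · -- connected
    rw [connected_iff_exists_forall_reachable]
    refine ⟨a, fun w => ?_⟩
    cases hw : h w with
    | false => exact (hr₁ a w ha hw).mono hle1
    | true => exact (hGadj.reachable).trans (((hr₂ b w hb hw).mono hle2))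
  · -- acyclic
    intro x c hc
    by_cases he : s(a, b) ∈ c.edges
    · have hbridge : G.IsBridge s(a, b) := by
        rw [isBridge_iff]
        rintro ⟨p⟩
        have hpres : ∀ ⦃u v⦄, (G \ fromEdgeSet {s(a, b)}).Adj u v → h u = h v := by
          rintro u v ⟨hadj, hne⟩
          rcases hadj with h12 | hE
          · exact hside h12
          · exact absurd hE hne
        have := walk_const h hpres p
        rw [ha, hb] at this
        cases this
      rw [isBridge_iff_mem_and_forall_cycle_notMem hGadj] at hbridge
      exact hbridge c hc he
    · have hsub : ∀ e ∈ c.edges, e ∈ (H₁ ⊔ H₂).edgeSet := by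
        intro e hec
        have hmem : e ∈ G.edgeSet := c.edges_subset_edgeSet hec
        rw [hGdef, edgeSet_sup, edgeSet_sup, edgeSet_fromEdgeSet] at hmem
        rcases hmem with hmem | hmem
        · rwa [edgeSet_sup]
        · exfalso
          rcases hmem with ⟨hmem, -⟩
          rw [Set.mem_singleton_iff] at hmem
          exact he (hmem ▸ hec)
      set c' := c.transfer (H₁ ⊔ H₂) hsub with hc'def
      have hc' : c'.IsCycle := hc.transfer hsub
      have hsupp : ∀ z ∈ c'.support, h z = h x :=
        walk_support_const h hside c'
      cases hx : h x with
      | false =>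
        have hedges : ∀ e ∈ c'.edges, e ∈ H₁.edgeSet := by
          intro e he'
          induction e with
          | h u v =>
            have hadj : (H₁ ⊔ H₂).Adj u v := c'.adj_of_mem_edges he'
            rcases hadj with hadj | hadj
            · exact hadj
            · exfalso
              have hu : u ∈ c'.support := SimpleGraph.Walk.fst_mem_support_of_mem_edges c' he'
              have := (hsupp u hu).trans hx
              rw [(h₂ hadj).1] at this
              cases this
        exact hac₁ (c'.transfer H₁ hedges) (hc'.transfer hedges)
      | true =>
        have hedges : ∀ e ∈ c'.edges, e ∈ H₂.edgeSet := by
          intro e he'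
          induction e with
          | h u v =>
            have hadj : (H₁ ⊔ H₂).Adj u v := c'.adj_of_mem_edges he'
            rcases hadj with hadj | hadj
            · exfalso
              have hu : u ∈ c'.support := SimpleGraph.Walk.fst_mem_support_of_mem_edges c' he'
              have := (hsupp u hu).trans hx
              rw [(h₁ hadj).1] at this
              cases this
            · exact hadj
        exact hac₂ (c'.transfer H₂ hedges) (hc'.transfer hedges)

/-! ### edge set helpers -/

lemma mem_edgeSet_map {V W : Type*} (G : SimpleGraph V) (f : V ↪ W) (e : Sym2 W) :
    e ∈ (G.map f).edgeSet ↔ ∃ t ∈ G.edgeSet, Sym2.map f t = e := by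
  induction e with
  | h x y =>
    rw [mem_edgeSet, map_adj]
    constructor
    · rintro ⟨u, v, huv, rfl, rfl⟩
      exact ⟨s(u, v), huv, rfl⟩
    · rintro ⟨t, ht, hmap⟩
      induction t with
      | h u v =>
        rw [Sym2.map_pair_eq, Sym2.eq_iff] at hmap
        rw [mem_edgeSet] at ht
        rcases hmap with ⟨rfl, rfl⟩ | ⟨rfl, rfl⟩
        · exact ⟨u, v, ht, rfl, rfl⟩
        · exact ⟨v, u, ht.symm, rfl, rfl⟩

lemma mem_edgeSet_single {W : Type*} {a b : W} (hab : a ≠ b) (e : Sym2 W) :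
    e ∈ (fromEdgeSet {s(a, b)}).edgeSet ↔ e = s(a, b) := by
  rw [edgeSet_fromEdgeSet]
  constructor
  · rintro ⟨h1, -⟩
    exact h1
  · rintro rfl
    exact ⟨rfl, by simp [hab]⟩

lemma map01_ne {m : ℕ} (t t' : Sym2 (Fin (2^m))) :
    Sym2.map (e0 m) t ≠ Sym2.map (e1 m) t' := by
  induction t with
  | h u v =>
    induction t' with
    | h u' v' =>
      rw [Sym2.map_pair_eq, Sym2.map_pair_eq, Ne, Sym2.eq_iff]
      rintro (⟨h, -⟩ | ⟨h, -⟩) <;> exact e0_ne_e1 m _ _ h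

lemma map0_ne_pair {m : ℕ} (t : Sym2 (Fin (2^m))) (x y : Fin (2^m)) :
    Sym2.map (e0 m) t ≠ s(e0 m x, e1 m y) := by
  induction t with
  | h u v =>
    rw [Sym2.map_pair_eq, Ne, Sym2.eq_iff]
    rintro (⟨-, h⟩ | ⟨h, -⟩) <;> exact e0_ne_e1 m _ _ h

lemma map1_ne_pair {m : ℕ} (t : Sym2 (Fin (2^m))) (x y : Fin (2^m)) :
    Sym2.map (e1 m) t ≠ s(e0 m x, e1 m y) := by
  induction t with
  | h u v =>
    rw [Sym2.map_pair_eq, Ne, Sym2.eq_iff]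
    rintro (⟨h, -⟩ | ⟨-, h⟩) <;> exact (e0_ne_e1 m _ _ h.symm)

end LTQProof

open LTQProof in
/-- For odd n ≥ 3: if LTQ_{n−1} contains k ≤ 2^(n−2) pairwise edge-disjoint
spanning trees, then so does LTQ_n. -/
theorem ltq_odd_step (n k : ℕ) (hn : 3 ≤ n) (hodd : Odd n) (hk : k ≤ 2 ^ (n - 2))
    (T : Fin k → SimpleGraph (Fin (2^(n-1))))
    (hsub : ∀ i, T i ≤ LTQ (n-1)) (htree : ∀ i, (T i).IsTree)
    (hdisj : ∀ i j, i ≠ j → Disjoint (T i).edgeSet (T j).edgeSet) :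
    ∃ T' : Fin k → SimpleGraph (Fin (2^n)),
      (∀ i, T' i ≤ LTQ n) ∧ (∀ i, (T' i).IsTree) ∧
      (∀ i j, i ≠ j → Disjoint (T' i).edgeSet (T' j).edgeSet) := by
  obtain ⟨m, rfl⟩ : ∃ m, n = m + 1 := ⟨n - 1, by omega⟩
  have hm : 2 ≤ m := by omega
  have hkN : k ≤ 2^m := le_trans hk (Nat.pow_le_pow_right (by norm_num) (by omega))
  let S : Fin k → SimpleGraph (Fin (2^m)) := fun i => T i
  have hsubS : ∀ i, S i ≤ LTQ m := hsub
  have htreeS : ∀ i, (S i).IsTree := htree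
  have hdisjS : ∀ i j, i ≠ j → Disjoint (S i).edgeSet (S j).edgeSet := hdisj
  clear hsub htree hdisj hk
  let X : Fin k → Fin (2^m) := fun i => ⟨i.1, lt_of_lt_of_le i.2 hkN⟩
  let A : Fin k → Fin (2^(m+1)) := fun i => e0 m (X i)
  let B : Fin k → Fin (2^(m+1)) := fun i => e1 m (tw m (X i))
  have hABne : ∀ i, A i ≠ B i := fun i => e0_ne_e1 m _ _
  let T' : Fin k → SimpleGraph (Fin (2^(m+1))) := fun i =>
    ((S i).map (e0 m)) ⊔ ((S i).map (e1 m)) ⊔ fromEdgeSet {s(A i, B i)}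
  refine ⟨T', ?_, ?_, ?_⟩
  · -- subgraph
    intro i
    refine sup_le (sup_le ?_ ?_) ?_
    · rintro x y ⟨-, u, v, huv, rfl, rfl⟩
      exact adj_e0 (hsubS i huv)
    · rintro x y ⟨-, u, v, huv, rfl, rfl⟩
      exact adj_e1 hm (hsubS i huv)
    · intro x y hxy
      rw [fromEdgeSet_adj, Set.mem_singleton_iff, Sym2.eq_iff] at hxy
      rcases hxy with ⟨⟨rfl, rfl⟩ | ⟨rfl, rfl⟩, -⟩
      · exact adj_matching hm (X i)
      · exact (adj_matching hm (X i)).symm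
  · -- trees
    intro i
    refine glue_isTree (fun w => decide (2^m ≤ w.1)) ?_ ?_ ?_ ?_ ?_ ?_ ?_ ?_
    · rintro x y ⟨-, u, v, -, rfl, rfl⟩
      constructor <;> · rw [decide_eq_false_iff_not, not_le]; exact e0_lt m _
    · rintro x y ⟨-, u, v, -, rfl, rfl⟩
      constructor <;> · rw [decide_eq_true_eq]; simp
    · rw [decide_eq_false_iff_not, not_le]; exact (X i).2
    · rw [decide_eq_true_eq]; simp [B]
    · intro x y hx hy
      rw [decide_eq_false_iff_not, not_le] at hx hy
      obtain ⟨u, rfl⟩ : ∃ u, e0 m u = x := ⟨⟨x.1, hx⟩, Fin.ext rfl⟩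
      obtain ⟨v, rfl⟩ : ∃ v, e0 m v = y := ⟨⟨y.1, hy⟩, Fin.ext rfl⟩
      exact ((htreeS i).isConnected.preconnected u v).map (homMap (S i) (e0 m))
    · intro x y hx hy
      rw [decide_eq_true_eq] at hx hy
      have h2 : (2:ℕ)^(m+1) = 2^m * 2 := pow_succ 2 m
      obtain ⟨u, rfl⟩ : ∃ u, e1 m u = x :=
        ⟨⟨x.1 - 2^m, by have := x.2; omega⟩, Fin.ext (by simp; omega)⟩
      obtain ⟨v, rfl⟩ : ∃ v, e1 m v = y :=
        ⟨⟨y.1 - 2^m, by have := y.2; omega⟩, Fin.ext (by simp; omega)⟩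
      exact ((htreeS i).isConnected.preconnected u v).map (homMap (S i) (e1 m))
    · exact map_acyclic (htreeS i).IsAcyclic
    · exact map_acyclic (htreeS i).IsAcyclic
  · -- disjoint
    have hmem : ∀ (i : Fin k) (e : Sym2 (Fin (2^(m+1)))), e ∈ (T' i).edgeSet ↔
        (∃ t ∈ (S i).edgeSet, Sym2.map (e0 m) t = e) ∨
        (∃ t ∈ (S i).edgeSet, Sym2.map (e1 m) t = e) ∨ e = s(A i, B i) := by
      intro i e
      show e ∈ (((S i).map (e0 m)) ⊔ ((S i).map (e1 m)) ⊔ fromEdgeSet {s(A i, B i)}).edgeSet ↔ _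
      rw [edgeSet_sup, edgeSet_sup, Set.mem_union, Set.mem_union,
        mem_edgeSet_map, mem_edgeSet_map, mem_edgeSet_single (hABne i)]
      exact or_assoc
    intro i j hij
    rw [Set.disjoint_left]
    intro e hei hej
    rw [hmem] at hei hej
    rcases hei with ⟨t, ht, rfl⟩ | ⟨t, ht, rfl⟩ | rfl
    · rcases hej with ⟨t', ht', heq⟩ | ⟨t', ht', heq⟩ | heq
      · obtain rfl : t' = t := Sym2.map.injective (e0 m).injective heq
        exact Set.disjoint_left.mp (hdisjS i j hij) ht ht'
      · exact map01_ne (m := m) t t' heq.symm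
      · exact map0_ne_pair t (X j) (tw m (X j)) heq
    · rcases hej with ⟨t', ht', heq⟩ | ⟨t', ht', heq⟩ | heq
      · exact map01_ne (m := m) t' t heq
      · obtain rfl : t' = t := Sym2.map.injective (e1 m).injective heq
        exact Set.disjoint_left.mp (hdisjS i j hij) ht ht'
      · exact map1_ne_pair t (X j) (tw m (X j)) heq
    · rcases hej with ⟨t', ht', heq⟩ | ⟨t', ht', heq⟩ | heq
      · exact map0_ne_pair t' (X i) (tw m (X i)) heq
      · exact map1_ne_pair t' (X i) (tw m (X i)) heq
      · rw [Sym2.eq_iff] at heq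
        rcases heq with ⟨h1, -⟩ | ⟨h1, -⟩
        · apply hij
          have := (e0 m).injective h1
          have hval : (X i).1 = (X j).1 := congrArg Fin.val this
          exact Fin.ext hval
        · exact e0_ne_e1 m _ _ h1
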